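/- Let (Ω, μ) be a probability space, d : Ω → ℝ and κ : Ω → ℝ^r random variables, and v : Ω → ℝ^r a random vector, with all entries of d·κ, κκᵀ, and (κκᵀ)·v integrable and v integrable. Assume the conditioned modified independence hypothesis in the uncorrelatedness form: E[(κ_i κ_j) v_k] = E[κ_i κ_j] E[v_k] for all indices i, j, k. Let R̃ := E[κκᵀ], p̃ := E[dκ], assume R̃ is invertible, and set α* := R̃⁻¹ p̃. Define the updated random vector v' := v + η (d − κᵀ(v + α*)) κ for a real step size η. Then E[v'] = (I_r − ηR̃) E[v]. -/
import Mathlib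


open Matrix MeasureTheory

/-- **One-step mean weight-error recursion under CMIA.**
With `R̃ := E[κ κᵀ]`, `p̃ := E[d κ]`, `α* := R̃⁻¹ p̃`, and the update
`v' := v + η (d − κᵀ(v + α*)) κ`, the conditioned modified independence
assumption gives `E[v'] = (I_r − η R̃) E[v]`. -/
theorem natural_klms_mean_recursion {Ω : Type*} [MeasurableSpace Ω]
    (μ : Measure Ω) [IsProbabilityMeasure μ] {r : ℕ}
    (d : Ω → ℝ) (κ v : Ω → Fin r → ℝ) (η : ℝ)
    (hdκ : ∀ i, Integrable (fun ω => d ω * κ ω i) μ)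
    (hκκ : ∀ i j, Integrable (fun ω => κ ω i * κ ω j) μ)
    (hκκv : ∀ i j k, Integrable (fun ω => κ ω i * κ ω j * v ω k) μ)
    (hv : ∀ k, Integrable (fun ω => v ω k) μ)
    (hCMIA : ∀ i j k, ∫ ω, κ ω i * κ ω j * v ω k ∂μ =
      (∫ ω, κ ω i * κ ω j ∂μ) * ∫ ω, v ω k ∂μ)
    (R : Matrix (Fin r) (Fin r) ℝ)
    (hRdef : R = Matrix.of fun i j => ∫ ω, κ ω i * κ ω j ∂μ)
    (hRunit : IsUnit R)
    (p : Fin r → ℝ) (hpdef : p = fun i => ∫ ω, d ω * κ ω i ∂μ)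
    (αstar : Fin r → ℝ) (hαstar : αstar = R⁻¹ *ᵥ p)
    (v' : Ω → Fin r → ℝ)
    (hupd : ∀ ω, v' ω = v ω + (η * (d ω - κ ω ⬝ᵥ (v ω + αstar))) • κ ω) :
    (fun k => ∫ ω, v' ω k ∂μ) =
      ((1 : Matrix (Fin r) (Fin r) ℝ) - η • R) *ᵥ fun k => ∫ ω, v ω k ∂μ := by
  have hRp : R *ᵥ αstar = p := by
    rw [hαstar, Matrix.mulVec_mulVec,
      Matrix.mul_nonsing_inv _ ((Matrix.isUnit_iff_isUnit_det R).mp hRunit),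
      Matrix.one_mulVec]
  funext k
  have hpt : ∀ ω, v' ω k = v ω k + (η * (d ω * κ ω k) -
      ((∑ j, η * (κ ω k * κ ω j * v ω j)) +
        ∑ j, (η * αstar j) * (κ ω k * κ ω j))) := by
    intro ω
    rw [hupd]
    simp only [Pi.add_apply, Pi.smul_apply, smul_eq_mul, dotProduct]
    congr 1
    rw [← Finset.sum_add_distrib, mul_sub, sub_mul]
    congr 1
    · ring
    · rw [Finset.mul_sum, Finset.sum_mul]
      exact Finset.sum_congr rfl fun j _ => by ring
  have hg : Integrable (fun ω => η * (d ω * κ ω k)) μ := (hdκ k).const_mul η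
  have hh : Integrable (fun ω => ∑ j, η * (κ ω k * κ ω j * v ω j)) μ :=
    integrable_finset_sum _ fun j _ => (hκκv k j j).const_mul η
  have he : Integrable (fun ω => ∑ j, (η * αstar j) * (κ ω k * κ ω j)) μ :=
    integrable_finset_sum _ fun j _ => (hκκ k j).const_mul _
  have hadd : Integrable (fun ω => (∑ j, η * (κ ω k * κ ω j * v ω j)) +
      ∑ j, (η * αstar j) * (κ ω k * κ ω j)) μ := hh.add he
  have hsub : Integrable (fun ω => η * (d ω * κ ω k) -
      ((∑ j, η * (κ ω k * κ ω j * v ω j)) +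
        ∑ j, (η * αstar j) * (κ ω k * κ ω j))) μ := hg.sub hadd
  calc ∫ ω, v' ω k ∂μ
      = ∫ ω, (v ω k + (η * (d ω * κ ω k) -
          ((∑ j, η * (κ ω k * κ ω j * v ω j)) +
            ∑ j, (η * αstar j) * (κ ω k * κ ω j)))) ∂μ := by
        exact integral_congr_ae (Filter.Eventually.of_forall hpt)
    _ = (∫ ω, v ω k ∂μ) + (η * ∫ ω, d ω * κ ω k ∂μ -
          ((∑ j, η * ∫ ω, κ ω k * κ ω j * v ω j ∂μ) +
            ∑ j, (η * αstar j) * ∫ ω, κ ω k * κ ω j ∂μ)) := by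
        rw [integral_add (hv k) hsub,
          integral_sub hg hadd, integral_add hh he,
          integral_finset_sum _ fun j _ => (hκκv k j j).const_mul η,
          integral_finset_sum _ fun j _ => (hκκ k j).const_mul _,
          integral_const_mul]
        simp only [integral_const_mul]
    _ = (∫ ω, v ω k ∂μ) - η * ∑ j, R k j * ∫ ω, v ω j ∂μ := by
        have h1 : ∑ j, (η * αstar j) * ∫ ω, κ ω k * κ ω j ∂μ
            = η * ∫ ω, d ω * κ ω k ∂μ := by
          have : (R *ᵥ αstar) k = p k := by rw [hRp]
          simp only [Matrix.mulVec, dotProduct, hRdef, Matrix.of_apply,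
            hpdef] at this
          rw [← this, Finset.mul_sum]
          exact Finset.sum_congr rfl fun j _ => by ring
        have h2 : ∀ j, ∫ ω, κ ω k * κ ω j * v ω j ∂μ
            = R k j * ∫ ω, v ω j ∂μ := fun j => by
          rw [hCMIA k j j, hRdef]; rfl
        rw [h1]
        simp only [h2]
        rw [Finset.mul_sum]
        ring_nf
    _ = (((1 : Matrix (Fin r) (Fin r) ℝ) - η • R) *ᵥ fun k => ∫ ω, v ω k ∂μ) k := by
        rw [Matrix.sub_mulVec, Matrix.smul_mulVec, Matrix.one_mulVec]
        simp [Matrix.mulVec, dotProduct, Finset.mul_sum]
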